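/- Let G be obtained from two vertex-disjoint connected graphs G1 and G2 by identifying a fixed vertex u1 of G1 with a fixed vertex u2 of G2 (call the merged vertex u). Then N(G) = N(G1) + N(G2) − 1 + (N(G1)_{u1} − 1)(N(G2)_{u2} − 1). -/

import Mathlib

open SimpleGraph

/-- Number of (nonempty) connected induced subgraphs of `G`. -/
noncomputable def numCIS {V : Type*} (G : SimpleGraph V) : ℕ :=
  Nat.card {s : Finset V // s.Nonempty ∧ (G.induce (↑s : Set V)).Connected}

/-- Number of connected induced subgraphs of `G` containing the vertex `v`. -/
noncomputable def numCISat {V : Type*} (G : SimpleGraph V) (v : V) : ℕ :=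
  Nat.card {s : Finset V // v ∈ s ∧ (G.induce (↑s : Set V)).Connected}

/-- Number of connected induced subgraphs of `G` containing both `u` and `v`. -/
noncomputable def numCISat2 {V : Type*} (G : SimpleGraph V) (u v : V) : ℕ :=
  Nat.card {s : Finset V // u ∈ s ∧ v ∈ s ∧ (G.induce (↑s : Set V)).Connected}

/- ### Auxiliary material -/

noncomputable def induceInduceIso {V : Type*} (G : SimpleGraph V) (A : Set V) (t : Set ↑A) :
    (G.induce A).induce t ≃g G.induce (Subtype.val '' t) where
  toEquiv := (Equiv.Set.image Subtype.val t Subtype.val_injective)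
  map_rel_iff' := by intro a b; simp [Equiv.Set.image, Equiv.Set.imageOfInjOn]

def finsetReindex {V : Type*} [DecidableEq V] (A : Finset V) (P : Finset V → Prop) :
    {t : Finset ↑(↑A : Set V) // P (t.map (Function.Embedding.subtype _))} ≃
    {s : Finset V // ↑s ⊆ (↑A : Set V) ∧ P s} where
  toFun t := ⟨t.1.map (Function.Embedding.subtype _), by
      intro x hx
      simp only [Finset.coe_map, Set.mem_image, Finset.mem_coe] at hx
      obtain ⟨a, _, rfl⟩ := hx
      exact a.2, t.2⟩
  invFun s := ⟨s.1.subtype _, by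
      have h : (s.1.subtype (fun x => x ∈ (↑A : Set V))).map (Function.Embedding.subtype _)
          = s.1 := by
        rw [Finset.subtype_map]
        exact Finset.filter_true_of_mem fun x hx => s.2.1 hx
      rw [h]; exact s.2.2⟩
  left_inv t := by
    apply Subtype.ext
    ext a
    simp only [Finset.mem_subtype, Finset.mem_map, Function.Embedding.coe_subtype, Subtype.exists]
    constructor
    · rintro ⟨b, hb, hbt, h⟩
      obtain rfl : (⟨b, hb⟩ : ↑(↑A : Set V)) = a := Subtype.ext h
      exact hbt
    · intro ha
      exact ⟨↑a, a.2, by simpa using ha⟩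
  right_inv s := by
    apply Subtype.ext
    ext v
    simp only [Finset.mem_map, Finset.mem_subtype, Function.Embedding.coe_subtype, Subtype.exists]
    constructor
    · rintro ⟨a, ha, h, rfl⟩; exact h
    · intro hv; exact ⟨v, s.2.1 hv, hv, rfl⟩

lemma conn_map_iff {V : Type*} [DecidableEq V] (G : SimpleGraph V) (A : Finset V)
    (t : Finset ↑(↑A : Set V)) :
    ((G.induce ↑A).induce ↑t).Connected ↔
      (G.induce (↑(t.map (Function.Embedding.subtype _)) : Set V)).Connected := by
  rw [(induceInduceIso G ↑A ↑t).connected_iff]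
  have : Subtype.val '' (↑t : Set ↑(↑A : Set V)) =
      (↑(t.map (Function.Embedding.subtype _)) : Set V) := by
    rw [Finset.coe_map]; rfl
  rw [this]

lemma nonempty_map_iff {V : Type*} [DecidableEq V] (A : Finset V) (t : Finset ↑(↑A : Set V)) :
    t.Nonempty ↔ (t.map (Function.Embedding.subtype _)).Nonempty := by
  simp [Finset.map_nonempty]

lemma mem_map_iff {V : Type*} [DecidableEq V] (A : Finset V) (t : Finset ↑(↑A : Set V))
    (u : V) (hu : u ∈ (↑A : Set V)) :
    (⟨u, hu⟩ : ↑(↑A : Set V)) ∈ t ↔ u ∈ t.map (Function.Embedding.subtype _) := by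
  constructor
  · intro h; exact Finset.mem_map_of_mem _ h
  · intro h
    obtain ⟨a, ha, hav⟩ := Finset.mem_map.mp h
    obtain rfl : a = ⟨u, hu⟩ := Subtype.ext hav
    exact ha

lemma numCIS_induce_eq {V : Type*} [DecidableEq V] (G : SimpleGraph V) (A : Finset V) :
    numCIS (G.induce (↑A : Set V)) =
      Nat.card {s : Finset V // ↑s ⊆ (↑A : Set V) ∧
        (s.Nonempty ∧ (G.induce (↑s : Set V)).Connected)} := by
  refine Nat.card_congr ((Equiv.subtypeEquivRight ?_).trans
    (finsetReindex A (fun s => s.Nonempty ∧ (G.induce (↑s : Set V)).Connected)))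
  intro t
  exact and_congr (nonempty_map_iff A t) (conn_map_iff G A t)

lemma numCISat_induce_eq {V : Type*} [DecidableEq V] (G : SimpleGraph V) (A : Finset V)
    (u : V) (hu : u ∈ (↑A : Set V)) :
    numCISat (G.induce (↑A : Set V)) ⟨u, hu⟩ =
      Nat.card {s : Finset V // ↑s ⊆ (↑A : Set V) ∧
        (u ∈ s ∧ (G.induce (↑s : Set V)).Connected)} := by
  refine Nat.card_congr ((Equiv.subtypeEquivRight ?_).trans
    (finsetReindex A (fun s => u ∈ s ∧ (G.induce (↑s : Set V)).Connected)))
  intro t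
  exact and_congr (mem_map_iff A t u hu) (conn_map_iff G A t)

/-- Within a connected induced set containing `u`, every vertex of `A` reaches `u`
inside `s ∩ A`. -/
lemma walk_reach_aux {V : Type*} [Fintype V] [DecidableEq V] (G : SimpleGraph V) (u : V)
    (A B : Finset V) (hcover : A ∪ B = Finset.univ)
    (huA : u ∈ A)
    (hedges : ∀ x ∈ A, ∀ y ∈ B, G.Adj x y → x = u ∨ y = u)
    (s : Finset V) (hus : u ∈ s) :
    ∀ {a b : ↑(↑s : Set V)} (_ : (G.induce (↑s : Set V)).Walk a b)
      (ha : (a : V) ∈ A) (_ : (b : V) = u),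
      (G.induce (↑(s ∩ A) : Set V)).Reachable
        ⟨↑a, Finset.mem_coe.mpr (Finset.mem_inter.mpr ⟨Finset.mem_coe.mp a.2, ha⟩)⟩
        ⟨u, Finset.mem_coe.mpr (Finset.mem_inter.mpr ⟨hus, huA⟩)⟩ := by
  intro a b p
  induction p with
  | nil =>
    intro ha hb
    subst hb
    exact Reachable.refl _
  | @cons x c y h q ih =>
    intro ha hb
    have h' : G.Adj ↑x ↑c := h
    by_cases hxu : (x : V) = u
    · subst hxu
      exact Reachable.refl _
    · have hcA : (c : V) ∈ A := by
        by_contra hcA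
        have hcB : (c : V) ∈ B := by
          have := Finset.mem_univ (c : V)
          rw [← hcover, Finset.mem_union] at this
          tauto
        rcases hedges ↑x ha ↑c hcB h' with h1 | h2
        · exact hxu h1
        · exact hcA (h2 ▸ huA)
      have step : (G.induce (↑(s ∩ A) : Set V)).Adj
          ⟨↑x, Finset.mem_coe.mpr (Finset.mem_inter.mpr ⟨Finset.mem_coe.mp x.2, ha⟩)⟩
          ⟨↑c, Finset.mem_coe.mpr (Finset.mem_inter.mpr ⟨Finset.mem_coe.mp c.2, hcA⟩)⟩ := h'
      exact step.reachable.trans (ih hcA hb)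

/-- A walk in an induced set avoiding `u` stays within `A` if it starts in `A`. -/
lemma walk_stay_aux {V : Type*} [Fintype V] [DecidableEq V] (G : SimpleGraph V) (u : V)
    (A B : Finset V) (hcover : A ∪ B = Finset.univ)
    (hedges : ∀ x ∈ A, ∀ y ∈ B, G.Adj x y → x = u ∨ y = u)
    (s : Finset V) (hus : u ∉ s) :
    ∀ {a b : ↑(↑s : Set V)} (_ : (G.induce (↑s : Set V)).Walk a b),
      (a : V) ∈ A → (b : V) ∈ A := by
  intro a b p
  induction p with
  | nil => exact fun h => h
  | @cons x c y h q ih =>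
    intro ha
    have h' : G.Adj ↑x ↑c := h
    have hcA : (c : V) ∈ A := by
      by_contra hcA
      have hcB : (c : V) ∈ B := by
        have := Finset.mem_univ (c : V)
        rw [← hcover, Finset.mem_union] at this
        tauto
      rcases hedges ↑x ha ↑c hcB h' with h1 | h2
      · exact hus (h1 ▸ Finset.mem_coe.mp x.2)
      · exact hus (h2 ▸ Finset.mem_coe.mp c.2)
    exact ih hcA

/-- If `s` is a connected induced set containing `u`, then `s ∩ A` is connected. -/
lemma conn_inter_lemma {V : Type*} [Fintype V] [DecidableEq V] (G : SimpleGraph V) (u : V)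
    (A B : Finset V) (hcover : A ∪ B = Finset.univ)
    (huA : u ∈ A)
    (hedges : ∀ x ∈ A, ∀ y ∈ B, G.Adj x y → x = u ∨ y = u)
    (s : Finset V) (hus : u ∈ s) (hc : (G.induce (↑s : Set V)).Connected) :
    (G.induce (↑(s ∩ A) : Set V)).Connected := by
  rw [connected_iff_exists_forall_reachable]
  refine ⟨⟨u, Finset.mem_coe.mpr (Finset.mem_inter.mpr ⟨hus, huA⟩)⟩, ?_⟩
  intro w
  have hw : (w : V) ∈ s ∩ A := Finset.mem_coe.mp w.2
  have hws : (w : V) ∈ s := (Finset.mem_inter.mp hw).1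
  have hwA : (w : V) ∈ A := (Finset.mem_inter.mp hw).2
  have hr : (G.induce (↑s : Set V)).Reachable ⟨↑w, Finset.mem_coe.mpr hws⟩
      ⟨u, Finset.mem_coe.mpr hus⟩ := hc.preconnected _ _
  obtain ⟨p⟩ := hr
  have := walk_reach_aux G u A B hcover huA hedges s hus p hwA rfl
  exact this.symm

/-- If `s` is connected, avoids `u`, and contains a vertex of `A`, then `s ⊆ A`. -/
lemma subset_lemma {V : Type*} [Fintype V] [DecidableEq V] (G : SimpleGraph V) (u : V)
    (A B : Finset V) (hcover : A ∪ B = Finset.univ)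
    (hedges : ∀ x ∈ A, ∀ y ∈ B, G.Adj x y → x = u ∨ y = u)
    (s : Finset V) (hus : u ∉ s) (hc : (G.induce (↑s : Set V)).Connected)
    (x : V) (hx : x ∈ s) (hxA : x ∈ A) : s ⊆ A := by
  intro y hy
  have hr : (G.induce (↑s : Set V)).Reachable ⟨x, Finset.mem_coe.mpr hx⟩
      ⟨y, Finset.mem_coe.mpr hy⟩ := hc.preconnected _ _
  obtain ⟨p⟩ := hr
  exact walk_stay_aux G u A B hcover hedges s hus p hxA

lemma card_subtype_or {α : Type*} [Finite α] (p q : α → Prop)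
    (h : ∀ x, p x → q x → False) :
    Nat.card {x // p x ∨ q x} = Nat.card {x // p x} + Nat.card {x // q x} := by
  classical
  rw [← Nat.card_sum]
  exact Nat.card_congr (subtypeOrEquiv p q
    (fun c hcp hcq x hcx => (h x (hcp x hcx) (hcq x hcx)).elim))

/-- The main splitting equivalence for connected sets containing the cut vertex. -/
noncomputable def mergePairEquiv {V : Type*} [Fintype V] [DecidableEq V] (G : SimpleGraph V)
    (u : V) (A B : Finset V) (hcover : A ∪ B = Finset.univ) (hinter : A ∩ B = {u})
    (huA : u ∈ A) (huB : u ∈ B)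
    (hedges : ∀ x ∈ A, ∀ y ∈ B, G.Adj x y → x = u ∨ y = u) :
    {s : Finset V // u ∈ s ∧ (G.induce (↑s : Set V)).Connected} ≃
      {p : Finset V // ↑p ⊆ (↑A : Set V) ∧ (u ∈ p ∧ (G.induce (↑p : Set V)).Connected)} ×
      {q : Finset V // ↑q ⊆ (↑B : Set V) ∧ (u ∈ q ∧ (G.induce (↑q : Set V)).Connected)} where
  toFun s := by
    refine (⟨s.1 ∩ A, ?_, ?_, ?_⟩, ⟨s.1 ∩ B, ?_, ?_, ?_⟩)
    · exact Finset.coe_subset.mpr (Finset.inter_subset_right)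
    · exact Finset.mem_inter.mpr ⟨s.2.1, huA⟩
    · exact conn_inter_lemma G u A B hcover huA hedges s.1 s.2.1 s.2.2
    · exact Finset.coe_subset.mpr (Finset.inter_subset_right)
    · exact Finset.mem_inter.mpr ⟨s.2.1, huB⟩
    · refine conn_inter_lemma G u B A ?_ huB ?_ s.1 s.2.1 s.2.2
      · rw [Finset.union_comm]; exact hcover
      · intro x hx y hy hadj
        exact (hedges y hy x hx hadj.symm).symm
  invFun pq := by
    refine ⟨pq.1.1 ∪ pq.2.1, Finset.mem_union_left _ pq.1.2.2.1, ?_⟩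
    have := SimpleGraph.induce_union_connected pq.1.2.2.2.preconnected pq.2.2.2.2.preconnected
      ⟨u, Finset.mem_coe.mpr pq.1.2.2.1, Finset.mem_coe.mpr pq.2.2.2.1⟩
    rwa [← Finset.coe_union] at this
  left_inv s := by
    apply Subtype.ext
    simp only
    rw [← Finset.inter_union_distrib_left, hcover, Finset.inter_univ]
  right_inv pq := by
    obtain ⟨⟨p, hpA, hup, hcp⟩, ⟨q, hqB, huq, hcq⟩⟩ := pq
    have hpA' : p ⊆ A := Finset.coe_subset.mp hpA
    have hqB' : q ⊆ B := Finset.coe_subset.mp hqB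
    have h1 : (p ∪ q) ∩ A = p := by
      ext x
      simp only [Finset.mem_inter, Finset.mem_union]
      constructor
      · rintro ⟨hx1 | hx2, hxA⟩
        · exact hx1
        · have : x ∈ A ∩ B := Finset.mem_inter.mpr ⟨hxA, hqB' hx2⟩
          rw [hinter, Finset.mem_singleton] at this
          exact this ▸ hup
      · intro hx; exact ⟨Or.inl hx, hpA' hx⟩
    have h2 : (p ∪ q) ∩ B = q := by
      ext x
      simp only [Finset.mem_inter, Finset.mem_union]
      constructor
      · rintro ⟨hx1 | hx2, hxB⟩
        · have : x ∈ A ∩ B := Finset.mem_inter.mpr ⟨hpA' hx1, hxB⟩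
          rw [hinter, Finset.mem_singleton] at this
          exact this ▸ huq
        · exact hx2
      · intro hx; exact ⟨Or.inr hx, hqB' hx⟩
    refine Prod.ext (Subtype.ext ?_) (Subtype.ext ?_)
    · exact h1
    · exact h2

/-- If `G` is obtained from two vertex-disjoint connected graphs `G1 = G.induce A` and
`G2 = G.induce B` by identifying a vertex of the first with a vertex of the second (the
merged vertex being `u`), then
`N(G) = N(G1) + N(G2) - 1 + (N(G1)_u - 1) * (N(G2)_u - 1)`. -/
theorem numCIS_merge {V : Type*} [Fintype V] [DecidableEq V] (G : SimpleGraph V) (u : V)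
    (A B : Finset V) (hcover : A ∪ B = Finset.univ) (hinter : A ∩ B = {u})
    (huA : u ∈ A) (huB : u ∈ B)
    (hedges : ∀ x ∈ A, ∀ y ∈ B, G.Adj x y → x = u ∨ y = u)
    (h1 : (G.induce (↑A : Set V)).Connected) (h2 : (G.induce (↑B : Set V)).Connected) :
    numCIS G = numCIS (G.induce (↑A : Set V)) + numCIS (G.induce (↑B : Set V)) - 1 +
      (numCISat (G.induce (↑A : Set V)) ⟨u, Finset.mem_coe.mpr huA⟩ - 1) *
      (numCISat (G.induce (↑B : Set V)) ⟨u, Finset.mem_coe.mpr huB⟩ - 1) := by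
  classical
  set C : Finset V → Prop := fun s => (G.induce (↑s : Set V)).Connected with hC
  set a := Nat.card {s : Finset V // ↑s ⊆ (↑A : Set V) ∧ (u ∈ s ∧ C s)} with ha
  set b := Nat.card {s : Finset V // ↑s ⊆ (↑B : Set V) ∧ (u ∈ s ∧ C s)} with hb
  set x := Nat.card {s : Finset V // u ∉ s ∧ (↑s ⊆ (↑A : Set V) ∧ (s.Nonempty ∧ C s))} with hx
  set y := Nat.card {s : Finset V // u ∉ s ∧ (↑s ⊆ (↑B : Set V) ∧ (s.Nonempty ∧ C s))} with hy
  -- symmetric variants of the hypotheses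
  have hcover' : B ∪ A = Finset.univ := by rw [Finset.union_comm]; exact hcover
  have hinter' : B ∩ A = {u} := by rw [Finset.inter_comm]; exact hinter
  have hedges' : ∀ x ∈ B, ∀ y ∈ A, G.Adj x y → x = u ∨ y = u := by
    intro p hp q hq hadj
    exact (hedges q hq p hp hadj.symm).symm
  -- the at-u counts
  have hAu : numCISat (G.induce (↑A : Set V)) ⟨u, Finset.mem_coe.mpr huA⟩ = a :=
    numCISat_induce_eq G A u (Finset.mem_coe.mpr huA)
  have hBu : numCISat (G.induce (↑B : Set V)) ⟨u, Finset.mem_coe.mpr huB⟩ = b :=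
    numCISat_induce_eq G B u (Finset.mem_coe.mpr huB)
  -- the total counts for A and B
  have hNA : numCIS (G.induce (↑A : Set V)) = a + x := by
    rw [numCIS_induce_eq G A]
    have : ∀ s : Finset V, (↑s ⊆ (↑A : Set V) ∧ (s.Nonempty ∧ C s)) ↔
        ((↑s ⊆ (↑A : Set V) ∧ (u ∈ s ∧ C s)) ∨
         (u ∉ s ∧ (↑s ⊆ (↑A : Set V) ∧ (s.Nonempty ∧ C s)))) := by
      intro s
      constructor
      · rintro ⟨hs, hne, hc⟩
        by_cases hu : u ∈ s
        · exact Or.inl ⟨hs, hu, hc⟩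
        · exact Or.inr ⟨hu, hs, hne, hc⟩
      · rintro (⟨hs, hu, hc⟩ | ⟨_, hs, hne, hc⟩)
        · exact ⟨hs, ⟨u, hu⟩, hc⟩
        · exact ⟨hs, hne, hc⟩
    rw [Nat.card_congr (Equiv.subtypeEquivRight this)]
    exact card_subtype_or _ _ (fun s hp hq => hq.1 hp.2.1)
  have hNB : numCIS (G.induce (↑B : Set V)) = b + y := by
    rw [numCIS_induce_eq G B]
    have : ∀ s : Finset V, (↑s ⊆ (↑B : Set V) ∧ (s.Nonempty ∧ C s)) ↔
        ((↑s ⊆ (↑B : Set V) ∧ (u ∈ s ∧ C s)) ∨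
         (u ∉ s ∧ (↑s ⊆ (↑B : Set V) ∧ (s.Nonempty ∧ C s)))) := by
      intro s
      constructor
      · rintro ⟨hs, hne, hc⟩
        by_cases hu : u ∈ s
        · exact Or.inl ⟨hs, hu, hc⟩
        · exact Or.inr ⟨hu, hs, hne, hc⟩
      · rintro (⟨hs, hu, hc⟩ | ⟨_, hs, hne, hc⟩)
        · exact ⟨hs, ⟨u, hu⟩, hc⟩
        · exact ⟨hs, hne, hc⟩
    rw [Nat.card_congr (Equiv.subtypeEquivRight this)]
    exact card_subtype_or _ _ (fun s hp hq => hq.1 hp.2.1)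
  -- the total count for G
  have hNG : numCIS G = a * b + (x + y) := by
    unfold numCIS
    have key : ∀ s : Finset V, (s.Nonempty ∧ C s) ↔
        ((u ∈ s ∧ C s) ∨
         ((u ∉ s ∧ (↑s ⊆ (↑A : Set V) ∧ (s.Nonempty ∧ C s))) ∨
          (u ∉ s ∧ (↑s ⊆ (↑B : Set V) ∧ (s.Nonempty ∧ C s))))) := by
      intro s
      constructor
      · rintro ⟨hne, hc⟩
        by_cases hu : u ∈ s
        · exact Or.inl ⟨hu, hc⟩
        · have hex := hne
          obtain ⟨z, hz⟩ := hex
          have hzAB : z ∈ A ∪ B := by rw [hcover]; exact Finset.mem_univ z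
          rcases Finset.mem_union.mp hzAB with hzA | hzB
          · exact Or.inr (Or.inl ⟨hu, Finset.coe_subset.mpr
              (subset_lemma G u A B hcover hedges s hu hc z hz hzA), hne, hc⟩)
          · exact Or.inr (Or.inr ⟨hu, Finset.coe_subset.mpr
              (subset_lemma G u B A hcover' hedges' s hu hc z hz hzB), hne, hc⟩)
      · rintro (⟨hu, hc⟩ | (⟨_, _, hne, hc⟩ | ⟨_, _, hne, hc⟩))
        · exact ⟨⟨u, hu⟩, hc⟩
        · exact ⟨hne, hc⟩
        · exact ⟨hne, hc⟩
    rw [Nat.card_congr (Equiv.subtypeEquivRight key)]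
    rw [card_subtype_or _ _ (fun s hp hq => by rcases hq with hq | hq <;> exact hq.1 hp.1)]
    rw [card_subtype_or _ _ (fun s hp hq => by
      have hsA := hp.2.1
      have hsB := hq.2.1
      obtain ⟨z, hz⟩ := hp.2.2.1
      have hzu : z ∈ A ∩ B := Finset.mem_inter.mpr
        ⟨Finset.mem_coe.mp (hsA (Finset.mem_coe.mpr hz)),
         Finset.mem_coe.mp (hsB (Finset.mem_coe.mpr hz))⟩
      rw [hinter, Finset.mem_singleton] at hzu
      exact hp.1 (hzu ▸ hz))]
    have : Nat.card {s : Finset V // u ∈ s ∧ C s} = a * b := by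
      rw [Nat.card_congr (mergePairEquiv G u A B hcover hinter huA huB hedges),
        Nat.card_prod]
    rw [this]
  -- positivity
  have hapos : 1 ≤ a := by
    rw [ha]
    haveI : Nonempty {s : Finset V // ↑s ⊆ (↑A : Set V) ∧ (u ∈ s ∧ C s)} :=
      ⟨⟨A, subset_rfl, huA, h1⟩⟩
    exact Nat.card_pos
  have hbpos : 1 ≤ b := by
    rw [hb]
    haveI : Nonempty {s : Finset V // ↑s ⊆ (↑B : Set V) ∧ (u ∈ s ∧ C s)} :=
      ⟨⟨B, subset_rfl, huB, h2⟩⟩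
    exact Nat.card_pos
  -- final arithmetic
  rw [hNG, hNA, hNB, hAu, hBu]
  clear_value a b x y
  obtain ⟨a', rfl⟩ : ∃ a', a = a' + 1 := ⟨a - 1, by omega⟩
  obtain ⟨b', rfl⟩ : ∃ b', b = b' + 1 := ⟨b - 1, by omega⟩
  have e1 : a' + 1 + x + (b' + 1 + y) - 1 = a' + x + b' + y + 1 := by omega
  have e2 : a' + 1 - 1 = a' := by omega
  have e3 : b' + 1 - 1 = b' := by omega
  rw [e1, e2, e3]
  ring
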